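/- In L ⊗ ℝ (the real extension of the K3 lattice L with bilinear form B), set z = w₁ + w₂ + w₃ + w₄, x = w₁ + w₂ − w₃ − w₄ and y = √2·(w₅ + w₆). Then B(x,x) = B(y,y) = B(z,z) = 4, the three vectors are pairwise B-orthogonal, and the set {d ∈ ℤ²² : B(d,x) = B(d,y) = B(d,z) = 0} is exactly the ℤ-span of the 19 vectors w₁ − w₂, w₃ − w₄, w₅ − w₆, w₇, w₈, …, w₂₂. -/

import Mathlib

open Matrix

/-- The Gram matrix of `3H`: block-diagonal sum of three hyperbolic planes. -/
def Gram3H : Matrix (Fin 6) (Fin 6) ℤ :=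
  Matrix.of fun i j => if i.val / 2 = j.val / 2 ∧ i ≠ j then 1 else 0

/-- The Gram matrix of the lattice `−E8`. -/
def GramE8 : Matrix (Fin 8) (Fin 8) ℤ :=
  !![-2,0,1,0,0,0,0,0;
     0,-2,0,1,0,0,0,0;
     1,0,-2,1,0,0,0,0;
     0,1,1,-2,1,0,0,0;
     0,0,0,1,-2,1,0,0;
     0,0,0,0,1,-2,1,0;
     0,0,0,0,0,1,-2,1;
     0,0,0,0,0,0,1,-2]

/-- The Gram matrix of the K3 lattice `L = 3H ⊕ 2(−E8)`. -/
def GramL : Matrix (Fin 22) (Fin 22) ℤ :=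
  Matrix.of fun i j =>
    if h : i.val < 6 then
      (if h' : j.val < 6 then Gram3H ⟨i.val, h⟩ ⟨j.val, h'⟩ else 0)
    else if h2 : i.val < 14 then
      (if h' : 6 ≤ j.val ∧ j.val < 14 then
        GramE8 ⟨i.val - 6, by omega⟩ ⟨j.val - 6, by omega⟩ else 0)
    else
      (if h' : 14 ≤ j.val then
        GramE8 ⟨i.val - 14, by have := i.isLt; omega⟩
          ⟨j.val - 14, by have := j.isLt; omega⟩ else 0)

/-- The standard basis vectors of the K3 lattice: `w (i-1) = wᵢ`. -/
def w22 (i : Fin 22) : Fin 22 → ℤ := Pi.single i 1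

/-- The real Gram matrix of the K3 lattice. -/
noncomputable def GramLR : Matrix (Fin 22) (Fin 22) ℝ := GramL.map (Int.cast : ℤ → ℝ)

/-- The standard basis vectors of `L ⊗ ℝ = ℝ²²`. -/
noncomputable def w22R (i : Fin 22) : Fin 22 → ℝ := Pi.single i 1

def xZ : Fin 22 → ℤ := ![1,1,-1,-1,0,0,0,0,0,0,0,0,0,0,0,0,0,0,0,0,0,0]
def zZ : Fin 22 → ℤ := ![1,1,1,1,0,0,0,0,0,0,0,0,0,0,0,0,0,0,0,0,0,0]
def yZ : Fin 22 → ℤ := ![0,0,0,0,1,1,0,0,0,0,0,0,0,0,0,0,0,0,0,0,0,0]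

lemma mgx : GramL.mulVec xZ = xZ := by decide
lemma mgz : GramL.mulVec zZ = zZ := by decide
lemma mgy : GramL.mulVec yZ = yZ := by decide

lemma castdot (u v : Fin 22 → ℤ) :
    (fun i => ((u i : ℝ))) ⬝ᵥ GramLR.mulVec (fun i => ((v i : ℝ))) =
      ((u ⬝ᵥ GramL.mulVec v : ℤ) : ℝ) := by
  simp [dotProduct, Matrix.mulVec, GramLR, Matrix.map_apply]

lemma xcast : (fun i => ((xZ i : ℝ))) = w22R 0 + w22R 1 - w22R 2 - w22R 3 := by
  funext i; fin_cases i <;> simp [w22R, xZ, Pi.single_apply] <;> rfl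

lemma zcast : (fun i => ((zZ i : ℝ))) = w22R 0 + w22R 1 + w22R 2 + w22R 3 := by
  funext i; fin_cases i <;> simp [w22R, zZ, Pi.single_apply] <;> rfl

lemma ycast : (fun i => ((yZ i : ℝ))) = w22R 4 + w22R 5 := by
  funext i; fin_cases i <;> simp [w22R, yZ, Pi.single_apply] <;> rfl

lemma dgx (d : Fin 22 → ℤ) : d ⬝ᵥ xZ = d 0 + d 1 - d 2 - d 3 := by
  have h3 : (Fin.succ 2 : Fin 22) = 3 := rfl
  simp [dotProduct, xZ, Fin.sum_univ_succ, h3]; ring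

lemma dgz (d : Fin 22 → ℤ) : d ⬝ᵥ zZ = d 0 + d 1 + d 2 + d 3 := by
  have h3 : (Fin.succ 2 : Fin 22) = 3 := rfl
  simp [dotProduct, zZ, Fin.sum_univ_succ, h3]; ring

lemma dgy (d : Fin 22 → ℤ) : d ⬝ᵥ yZ = d 4 + d 5 := by
  simp [dotProduct, yZ, Fin.sum_univ_succ]

theorem stmt11 (x y z : Fin 22 → ℝ)
    (hz : z = w22R 0 + w22R 1 + w22R 2 + w22R 3)
    (hx : x = w22R 0 + w22R 1 - w22R 2 - w22R 3)
    (hy : y = Real.sqrt 2 • (w22R 4 + w22R 5)) :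
    x ⬝ᵥ GramLR.mulVec x = 4 ∧
    y ⬝ᵥ GramLR.mulVec y = 4 ∧
    z ⬝ᵥ GramLR.mulVec z = 4 ∧
    x ⬝ᵥ GramLR.mulVec y = 0 ∧
    x ⬝ᵥ GramLR.mulVec z = 0 ∧
    y ⬝ᵥ GramLR.mulVec z = 0 ∧
    ∀ d : Fin 22 → ℤ,
      ((fun i => (d i : ℝ)) ⬝ᵥ GramLR.mulVec x = 0 ∧
       (fun i => (d i : ℝ)) ⬝ᵥ GramLR.mulVec y = 0 ∧
       (fun i => (d i : ℝ)) ⬝ᵥ GramLR.mulVec z = 0) ↔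
      d ∈ Submodule.span ℤ
        {v : Fin 22 → ℤ | v = w22 0 - w22 1 ∨ v = w22 2 - w22 3 ∨ v = w22 4 - w22 5 ∨
          ∃ i : Fin 22, 6 ≤ i.val ∧ v = w22 i} := by
  have hx' : x = fun i => ((xZ i : ℝ)) := by rw [hx, xcast]
  have hz' : z = fun i => ((zZ i : ℝ)) := by rw [hz, zcast]
  have hy' : y = Real.sqrt 2 • fun i => ((yZ i : ℝ)) := by rw [hy, ycast]
  have s2 : Real.sqrt 2 * Real.sqrt 2 = 2 := Real.mul_self_sqrt (by norm_num)
  have s2ne : Real.sqrt 2 ≠ 0 := by positivity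
  have vxx : xZ ⬝ᵥ GramL.mulVec xZ = 4 := by rw [mgx, dgx]; decide
  have vzz : zZ ⬝ᵥ GramL.mulVec zZ = 4 := by rw [mgz, dgz]; decide
  have vyy : yZ ⬝ᵥ GramL.mulVec yZ = 2 := by rw [mgy, dgy]; decide
  have vxy : xZ ⬝ᵥ GramL.mulVec yZ = 0 := by rw [mgy, dgy]; decide
  have vxz : xZ ⬝ᵥ GramL.mulVec zZ = 0 := by rw [mgz, dgz]; decide
  have vyz : yZ ⬝ᵥ GramL.mulVec zZ = 0 := by rw [mgz, dgz]; decide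
  refine ⟨?_, ?_, ?_, ?_, ?_, ?_, ?_⟩
  · rw [hx', castdot, vxx]; norm_num
  · rw [hy', Matrix.mulVec_smul, smul_dotProduct, dotProduct_smul, smul_eq_mul, smul_eq_mul,
      castdot, vyy, ← mul_assoc, s2]; norm_num
  · rw [hz', castdot, vzz]; norm_num
  · rw [hx', hy', Matrix.mulVec_smul, dotProduct_smul, smul_eq_mul, castdot, vxy]; norm_num
  · rw [hx', hz', castdot, vxz]; norm_num
  · rw [hy', hz', smul_dotProduct, smul_eq_mul, castdot, vyz]; norm_num
  · intro d
    have hdx : (fun i => (d i : ℝ)) ⬝ᵥ GramLR.mulVec x = ((d 0 + d 1 - d 2 - d 3 : ℤ) : ℝ) := by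
      rw [hx', castdot, mgx, dgx]
    have hdz : (fun i => (d i : ℝ)) ⬝ᵥ GramLR.mulVec z = ((d 0 + d 1 + d 2 + d 3 : ℤ) : ℝ) := by
      rw [hz', castdot, mgz, dgz]
    have hdy : (fun i => (d i : ℝ)) ⬝ᵥ GramLR.mulVec y =
        Real.sqrt 2 * ((d 4 + d 5 : ℤ) : ℝ) := by
      rw [hy', Matrix.mulVec_smul, dotProduct_smul, smul_eq_mul, castdot, mgy, dgy]
    rw [hdx, hdy, hdz]
    constructor
    · rintro ⟨h1, h2, h3⟩
      have e1 : d 0 + d 1 - d 2 - d 3 = 0 := by exact_mod_cast h1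
      have e3 : d 0 + d 1 + d 2 + d 3 = 0 := by exact_mod_cast h3
      have e2 : d 4 + d 5 = 0 := by
        have := (mul_eq_zero.mp h2).resolve_left s2ne
        exact_mod_cast this
      have hdecomp : d = d 0 • (w22 0 - w22 1) + d 2 • (w22 2 - w22 3) + d 4 • (w22 4 - w22 5)
          + d 6 • w22 6 + d 7 • w22 7 + d 8 • w22 8 + d 9 • w22 9 + d 10 • w22 10
          + d 11 • w22 11 + d 12 • w22 12 + d 13 • w22 13 + d 14 • w22 14 + d 15 • w22 15
          + d 16 • w22 16 + d 17 • w22 17 + d 18 • w22 18 + d 19 • w22 19 + d 20 • w22 20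
          + d 21 • w22 21 := by
        funext i
        fin_cases i <;> simp [w22, Pi.single_apply] <;> omega
      rw [hdecomp]
      repeat' refine Submodule.add_mem _ ?_ ?_
      all_goals refine Submodule.smul_mem _ _ (Submodule.subset_span ?_)
      all_goals first
        | exact Or.inl rfl
        | exact Or.inr (Or.inl rfl)
        | exact Or.inr (Or.inr (Or.inl rfl))
        | (refine Or.inr (Or.inr (Or.inr ⟨_, ?_, rfl⟩)); decide)
    · intro hd
      have key : d 0 + d 1 = 0 ∧ d 2 + d 3 = 0 ∧ d 4 + d 5 = 0 := by
        refine Submodule.span_induction ?_ ?_ ?_ ?_ hd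
        · rintro v (rfl | rfl | rfl | ⟨i, hi, rfl⟩)
          · decide
          · decide
          · decide
          · have h0 : ∀ j : Fin 22, j.val < 6 → w22 i j = 0 := by
              intro j hj
              simp only [w22, Pi.single_apply]
              rw [if_neg]
              intro h; subst h; omega
            refine ⟨?_, ?_, ?_⟩ <;>
              simp [h0 0 (by decide), h0 1 (by decide), h0 2 (by decide),
                h0 3 (by decide), h0 4 (by decide), h0 5 (by decide)]
        · exact ⟨rfl, rfl, rfl⟩
        · intro a b _ _ ha hb
          obtain ⟨a1, a2, a3⟩ := ha
          obtain ⟨b1, b2, b3⟩ := hb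
          exact ⟨by simp only [Pi.add_apply]; omega, by simp only [Pi.add_apply]; omega,
            by simp only [Pi.add_apply]; omega⟩
        · intro c v _ hv
          obtain ⟨h1, h2, h3⟩ := hv
          refine ⟨?_, ?_, ?_⟩ <;> simp only [Pi.smul_apply, smul_eq_mul]
          · linear_combination c * h1
          · linear_combination c * h2
          · linear_combination c * h3
      obtain ⟨k1, k2, k3⟩ := key
      refine ⟨?_, ?_, ?_⟩
      · have : d 0 + d 1 - d 2 - d 3 = 0 := by omega
        rw [this]; norm_num
      · have : d 4 + d 5 = 0 := k3
        rw [this]; norm_num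
      · have : d 0 + d 1 + d 2 + d 3 = 0 := by omega
        rw [this]; norm_num
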